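/- Let h > 0, T ≥ 0, and let F : ℝ≥0 → ℝ be continuous with F(0) ∈ [0,h]. If the one-sided downward reflection Γʰ(F)(t) := F(t) − max(sup_{[0,t]} F − h, 0) satisfies Γʰ(F)(t) ≥ 0 for all t ∈ [0,T], then the two-sided Skorohod reflection satisfies Λ_{0,h}(F)(t) = Γʰ(F)(t) for all t ∈ [0,T]. -/

import Mathlib

open Set
open scoped NNReal ENNReal

/-- Solution data for the two-sided Skorohod reflection problem of `f` on `[0,h]`:
`c0` and `ch` are the compensators at `0` and at `h`,
and `fun t => f t + ch t + c0 t` is the reflected path `Λ_{0,h}(f)`.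
The support conditions on the measures `dc⁰` and `d(−cʰ)` are phrased as:
the compensator is constant on every (closed) interval on which the reflected
path avoids the corresponding boundary. -/
structure SkorohodPair (h : ℝ) (f c0 ch : ℝ≥0 → ℝ) : Prop where
  cont0 : Continuous c0
  conth : Continuous ch
  init0 : c0 0 = 0
  inith : ch 0 = 0
  mem_Icc : ∀ t, f t + ch t + c0 t ∈ Set.Icc (0 : ℝ) h
  mono0 : Monotone c0
  antih : Antitone ch
  flat0 : ∀ a b : ℝ≥0, a ≤ b → (∀ t ∈ Set.Icc a b, f t + ch t + c0 t ≠ 0) → c0 b = c0 a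
  flath : ∀ a b : ℝ≥0, a ≤ b → (∀ t ∈ Set.Icc a b, f t + ch t + c0 t ≠ h) → ch b = ch a

/-- The one-sided Skorohod reflection of `F` below level `h` (downward push at `h`):
`Γʰ(F)(t) = F t − max (sup_{[0,t]} F − h) 0`. -/
noncomputable def gammaDown (h : ℝ) (F : ℝ≥0 → ℝ) (t : ℝ≥0) : ℝ :=
  F t - max (sSup (F '' Set.Icc 0 t) - h) 0

namespace TwoSidedAux

variable (F : ℝ≥0 → ℝ)

/-- Running supremum of `F` on `[0,t]`. -/
noncomputable def S (t : ℝ≥0) : ℝ := sSup (F '' Icc 0 t)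

/-- The one-sided compensator `M t = max (S t - h) 0`. -/
noncomputable def M (h : ℝ) (t : ℝ≥0) : ℝ := max (S F t - h) 0

lemma gamma_eq (h : ℝ) (t : ℝ≥0) : gammaDown h F t = F t - M F h t := rfl

lemma image_ne (t : ℝ≥0) : (F '' Icc 0 t).Nonempty :=
  ⟨F 0, mem_image_of_mem F ⟨le_rfl, (zero_le : (0:ℝ≥0) ≤ t)⟩⟩

lemma image_bdd (hF : Continuous F) (t : ℝ≥0) : BddAbove (F '' Icc 0 t) :=
  isCompact_Icc.bddAbove_image hF.continuousOn

lemma le_S (hF : Continuous F) {u t : ℝ≥0} (hut : u ≤ t) : F u ≤ S F t :=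
  le_csSup (image_bdd F hF t) (mem_image_of_mem F ⟨(zero_le : (0:ℝ≥0) ≤ u), hut⟩)

lemma S_mono (hF : Continuous F) : Monotone (S F) := fun a b hab =>
  csSup_le_csSup (image_bdd F hF b) (image_ne F a)
    (image_mono (f := F) (Icc_subset_Icc le_rfl hab))

lemma M_mono (hF : Continuous F) (h : ℝ) : Monotone (M F h) := fun a b hab =>
  max_le_max (sub_le_sub_right (S_mono F hF hab) h) le_rfl

lemma M_nonneg (h : ℝ) (t : ℝ≥0) : 0 ≤ M F h t := le_max_right _ _

lemma gamma_le (hF : Continuous F) (h : ℝ) (t : ℝ≥0) : gammaDown h F t ≤ h := by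
  have h1 : F t - h ≤ M F h t :=
    le_trans (sub_le_sub_right (le_S F hF le_rfl) h) (le_max_left _ _)
  rw [gamma_eq]
  linarith

/-- `M` only increases when `Γʰ(F) = h`. -/
lemma M_flat (hF : Continuous F) (h : ℝ) {a b : ℝ≥0} (hab : a ≤ b)
    (hne : ∀ u ∈ Icc a b, gammaDown h F u ≠ h) : M F h b = M F h a := by
  refine le_antisymm ?_ (M_mono F hF h hab)
  by_contra hlt
  push_neg at hlt
  have hMb : M F h b = S F b - h := by
    have h0 : 0 ≤ M F h a := M_nonneg F h a
    rcases max_cases (S F b - h) (0 : ℝ) with ⟨he, _⟩ | ⟨he, hl⟩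
    · exact he
    · exact absurd (hlt.trans_le (he.le.trans h0)) (lt_irrefl _)
  have hSab : S F a < S F b := by
    by_contra hc
    push_neg at hc
    have h2 : M F h b ≤ M F h a := by
      rw [hMb]
      exact le_trans (sub_le_sub_right hc h) (le_max_left _ _)
    linarith
  obtain ⟨x, hx, hSx⟩ :=
    isCompact_Icc.exists_sSup_image_eq (nonempty_Icc.2 (zero_le : (0:ℝ≥0) ≤ b)) hF.continuousOn
  have hFx : F x = S F b := hSx.symm
  have hax : a ≤ x := by
    by_contra hc
    push_neg at hc
    have : F x ≤ S F a := le_S F hF hc.le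
    rw [hFx] at this
    exact absurd this (not_le.2 hSab)
  have hMx : M F h x = S F b - h := by
    refine le_antisymm ?_ ?_
    · rw [← hMb]
      exact M_mono F hF h hx.2
    · refine le_trans ?_ (le_max_left _ _)
      exact sub_le_sub_right (hFx ▸ le_S F hF le_rfl) h
  have : gammaDown h F x = h := by
    rw [gamma_eq, hMx, hFx]
    ring
  exact hne x ⟨hax, hx.2⟩ this

lemma dist_between {u v t : ℝ≥0} (h1 : min u t ≤ v) (h2 : v ≤ max u t) :
    dist v t ≤ dist u t := by
  rw [NNReal.dist_eq, NNReal.dist_eq]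
  rcases le_total u t with hut | htu
  · simp only [min_eq_left hut, max_eq_right hut] at h1 h2
    have c1 : (u : ℝ) ≤ v := h1
    have c2 : (v : ℝ) ≤ t := h2
    rw [abs_of_nonpos (by linarith), abs_of_nonpos (by linarith)]
    linarith
  · simp only [min_eq_right htu, max_eq_left htu] at h1 h2
    have c1 : (t : ℝ) ≤ v := h1
    have c2 : (v : ℝ) ≤ u := h2
    rw [abs_of_nonneg (by linarith), abs_of_nonneg (by linarith)]
    linarith

lemma S_cont (hF : Continuous F) : Continuous (S F) := by
  rw [Metric.continuous_iff]
  intro t ε hε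
  obtain ⟨δ, hδ, hδ'⟩ := Metric.continuousAt_iff.1 hF.continuousAt (ε / 3) (by positivity)
  refine ⟨δ, hδ, fun u hu => ?_⟩
  have key : S F (max u t) ≤ S F (min u t) + 2 * (ε / 3) := by
    refine csSup_le (image_ne F (max u t)) ?_
    rintro y ⟨v, ⟨-, hvb⟩, rfl⟩
    rcases le_total v (min u t) with hva | hav
    · have := le_S F hF hva
      linarith [this]
    · have hdv : dist v t < δ := lt_of_le_of_lt (dist_between hav hvb) hu
      have hda : dist (min u t) t < δ :=
        lt_of_le_of_lt (dist_between le_rfl (min_le_max)) hu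
      have h1 := hδ' hdv
      have h2 := hδ' hda
      rw [Real.dist_eq, abs_sub_lt_iff] at h1 h2
      have h3 : F (min u t) ≤ S F (min u t) := le_S F hF le_rfl
      linarith [h1.1, h2.2]
  have hmono := S_mono F hF
  have hmm : S F (min u t) ≤ S F (max u t) := hmono min_le_max
  have hu1 : S F (min u t) ≤ S F u := hmono (min_le_left u t)
  have hu2 : S F u ≤ S F (max u t) := hmono (le_max_left u t)
  have ht1 : S F (min u t) ≤ S F t := hmono (min_le_right u t)
  have ht2 : S F t ≤ S F (max u t) := hmono (le_max_right u t)
  rw [Real.dist_eq, abs_sub_lt_iff]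
  constructor <;> linarith

lemma M_cont (hF : Continuous F) (h : ℝ) : Continuous (M F h) :=
  ((S_cont F hF).sub continuous_const).max continuous_const

lemma S_zero : S F 0 = F 0 := by
  unfold S
  rw [Icc_self, image_singleton, csSup_singleton]

end TwoSidedAux

open TwoSidedAux in
/-- If the one-sided downward reflection `Γʰ(F)` stays non-negative on `[0,T]`, then it
coincides with the two-sided Skorohod reflection `Λ_{0,h}(F)` on `[0,T]`. -/
theorem two_sided_eq_one_sided_down
    (h : ℝ) (hh : 0 < h) (T : ℝ≥0) (F : ℝ≥0 → ℝ) (hF : Continuous F)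
    (hF0 : F 0 ∈ Set.Icc (0 : ℝ) h)
    (c0 ch : ℝ≥0 → ℝ) (hp : SkorohodPair h F c0 ch)
    (hpos : ∀ t ≤ T, 0 ≤ gammaDown h F t) :
    ∀ t ≤ T, F t + ch t + c0 t = gammaDown h F t := by
  intro t ht
  set D : ℝ≥0 → ℝ := fun u => c0 u + ch u + M F h u with hDdef
  have hXY : ∀ u, F u + ch u + c0 u = gammaDown h F u + D u := by
    intro u
    rw [gamma_eq]
    simp only [hDdef]
    ring
  have hDcont : Continuous D := (hp.cont0.add hp.conth).add (M_cont F hF h)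
  have hD0 : D 0 = 0 := by
    have hM0 : M F h 0 = 0 := by
      unfold M
      rw [S_zero]
      exact max_eq_right (by linarith [hF0.2])
    simp only [hDdef, hp.init0, hp.inith, hM0, add_zero, zero_add]
  suffices hDt : D t = 0 by
    rw [hXY t, hDt, add_zero]
  rcases lt_trichotomy (D t) 0 with hneg | h0 | hposT
  · -- D t < 0 : impossible
    exfalso
    set A := {u : ℝ≥0 | u ≤ t ∧ 0 ≤ D u} with hAdef
    have hA0 : (0 : ℝ≥0) ∈ A := ⟨(zero_le : (0:ℝ≥0) ≤ t), hD0.ge⟩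
    have hAne : A.Nonempty := ⟨0, hA0⟩
    have hAbdd : BddAbove A := ⟨t, fun u hu => hu.1⟩
    have hAclosed : IsClosed A := by
      have : A = Iic t ∩ D ⁻¹' (Ici 0) := by
        ext u; simp [hAdef, and_comm]
      rw [this]
      exact isClosed_Iic.inter (isClosed_Ici.preimage hDcont)
    set s := sSup A with hsdef
    have hsA : s ∈ A := hAclosed.csSup_mem hAne hAbdd
    have hst : s < t := by
      rcases lt_or_eq_of_le hsA.1 with hlt | heq
      · exact hlt
      · rw [heq] at hsA; linarith [hsA.2]
    have hIoc : ∀ u ∈ Ioc s t, D u < 0 := by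
      intro u hu
      by_contra hc
      push_neg at hc
      exact absurd (le_csSup hAbdd ⟨hu.2, hc⟩) (not_le.2 hu.1)
    have hkey : ∀ u ∈ Ioc s t, D u ≤ D t := by
      intro u hu
      have hch : ch t = ch u := by
        refine hp.flath u t hu.2 fun v hv => ?_
        have hv' : v ∈ Ioc s t := ⟨lt_of_lt_of_le hu.1 hv.1, hv.2⟩
        have hDv := hIoc v hv'
        have hYv : gammaDown h F v ≤ h := gamma_le F hF h v
        have := hXY v
        intro he
        rw [he] at this
        linarith
      have hc0 : c0 u ≤ c0 t := hp.mono0 hu.2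
      have hM : M F h u ≤ M F h t := M_mono F hF h hu.2
      simp only [hDdef]
      linarith [hch.ge]
    have hlim : D s ≤ D t := by
      have hne : (nhdsWithin s (Ioc s t)).NeBot := by
        rw [← mem_closure_iff_nhdsWithin_neBot, closure_Ioc (ne_of_lt hst)]
        exact ⟨le_rfl, le_of_lt hst⟩
      exact le_of_tendsto ((hDcont.tendsto s).mono_left nhdsWithin_le_nhds)
        (eventually_nhdsWithin_of_forall hkey)
    linarith [hsA.2]
  · exact h0
  · -- D t > 0 : impossible
    exfalso
    set A := {u : ℝ≥0 | u ≤ t ∧ D u ≤ 0} with hAdef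
    have hA0 : (0 : ℝ≥0) ∈ A := ⟨(zero_le : (0:ℝ≥0) ≤ t), hD0.le⟩
    have hAne : A.Nonempty := ⟨0, hA0⟩
    have hAbdd : BddAbove A := ⟨t, fun u hu => hu.1⟩
    have hAclosed : IsClosed A := by
      have : A = Iic t ∩ D ⁻¹' (Iic 0) := by
        ext u; simp [hAdef, and_comm]
      rw [this]
      exact isClosed_Iic.inter (isClosed_Iic.preimage hDcont)
    set s := sSup A with hsdef
    have hsA : s ∈ A := hAclosed.csSup_mem hAne hAbdd
    have hst : s < t := by
      rcases lt_or_eq_of_le hsA.1 with hlt | heq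
      · exact hlt
      · rw [heq] at hsA; linarith [hsA.2]
    have hIoc : ∀ u ∈ Ioc s t, 0 < D u := by
      intro u hu
      by_contra hc
      push_neg at hc
      exact absurd (le_csSup hAbdd ⟨hu.2, hc⟩) (not_le.2 hu.1)
    have hkey : ∀ u ∈ Ioc s t, D t ≤ D u := by
      intro u hu
      have hc0 : c0 t = c0 u := by
        refine hp.flat0 u t hu.2 fun v hv => ?_
        have hv' : v ∈ Ioc s t := ⟨lt_of_lt_of_le hu.1 hv.1, hv.2⟩
        have hDv := hIoc v hv'
        have hYv : 0 ≤ gammaDown h F v := hpos v (le_trans hv.2 ht)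
        have := hXY v
        intro he
        rw [he] at this
        linarith
      have hM : M F h t = M F h u := by
        refine M_flat F hF h hu.2 fun v hv => ?_
        have hv' : v ∈ Ioc s t := ⟨lt_of_lt_of_le hu.1 hv.1, hv.2⟩
        have hDv := hIoc v hv'
        have hXh : F v + ch v + c0 v ≤ h := (hp.mem_Icc v).2
        have := hXY v
        intro he
        rw [he] at this
        linarith
      have hch : ch t ≤ ch u := hp.antih hu.2
      simp only [hDdef]
      linarith [hc0.le, hM.le]
    have hlim : D t ≤ D s := by
      have hne : (nhdsWithin s (Ioc s t)).NeBot := by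
        rw [← mem_closure_iff_nhdsWithin_neBot, closure_Ioc (ne_of_lt hst)]
        exact ⟨le_rfl, le_of_lt hst⟩
      exact ge_of_tendsto ((hDcont.tendsto s).mono_left nhdsWithin_le_nhds)
        (eventually_nhdsWithin_of_forall hkey)
    linarith [hsA.2]
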